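/- Let d ≥ 1, let μ be a probability measure on ℝ^d with compact support, let a ≠ 0 and σ > 0 be real, and define the Gaussian kernel k(x, x₀) = (2πσ²)^{−d/2} exp(−‖x − a • x₀‖²/(2σ²)), the marginal density f(x) = ∫ k(x, x₀) dμ(x₀), and the vector-valued integral g(x) = ∫ k(x, x₀) • x₀ dμ(x₀). Then f(x) > 0 for all x, f is differentiable on ℝ^d with gradient ∇f(x) = ∫ (−(x − a • x₀)/σ²) k(x, x₀) dμ(x₀), and Tweedie's identity holds: a • g(x) = f(x) • x + σ² • ∇f(x) for all x ∈ ℝ^d; equivalently, the posterior mean m(x) := g(x)/f(x) satisfies m(x) = (1/a) • x + (σ²/a) • (∇f(x)/f(x)). -/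

import Mathlib

open MeasureTheory

lemma gauss_hasFDerivAt {d : ℕ} (σ c : ℝ) (hσ : 0 < σ) (b x : EuclideanSpace ℝ (Fin d)) :
    HasFDerivAt (fun y => c * Real.exp (-‖y - b‖ ^ 2 / (2 * σ ^ 2)))
      ((InnerProductSpace.toDual ℝ _) ((c * Real.exp (-‖x - b‖ ^ 2 / (2 * σ ^ 2))) •
        (-(σ ^ 2)⁻¹ • (x - b)))) x := by
  have hσ2 : (2 * σ ^ 2) ≠ 0 := by positivity
  have h1 : HasFDerivAt (fun y : EuclideanSpace ℝ (Fin d) => y - b)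
      (ContinuousLinearMap.id ℝ _) x := (hasFDerivAt_id x).sub_const _
  have h2 := h1.norm_sq
  have h3 : HasFDerivAt (fun y : EuclideanSpace ℝ (Fin d) => -‖y - b‖ ^ 2 / (2 * σ ^ 2))
      ((-(2 * σ ^ 2)⁻¹) • (2 • (innerSL ℝ ((fun y : EuclideanSpace ℝ (Fin d) => y - b) x)).comp
        (ContinuousLinearMap.id ℝ _))) x := by
    have := h2.const_mul (-(2 * σ ^ 2)⁻¹)
    have hfun : (fun y : EuclideanSpace ℝ (Fin d) => -‖y - b‖ ^ 2 / (2 * σ ^ 2)) =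
        fun y => -(2 * σ ^ 2)⁻¹ * ‖y - b‖ ^ 2 := by funext y; ring
    rw [hfun]; exact this
  have h4 := (h3.exp).const_mul c
  refine h4.congr_fderiv ?_
  ext w
  simp only [InnerProductSpace.toDual_apply_apply, ContinuousLinearMap.smul_apply,
    ContinuousLinearMap.coe_smul', Pi.smul_apply, ContinuousLinearMap.coe_comp',
    Function.comp_apply, ContinuousLinearMap.coe_id', id_eq, innerSL_apply_apply,
    real_inner_smul_left, smul_eq_mul, two_smul, ContinuousLinearMap.add_apply]
  ring

/-- Tweedie's identity: for a compactly supported probability measure `μ` on `ℝ^d`,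
`a ≠ 0`, `σ > 0`, Gaussian kernel `k(x,x₀) = (2πσ²)^{−d/2} exp(−‖x − a•x₀‖²/(2σ²))`,
marginal density `f(x) = ∫ k(x,x₀) dμ(x₀)` and `g(x) = ∫ k(x,x₀) • x₀ dμ(x₀)`:
`f > 0` everywhere, `f` is differentiable with gradient
`∇f(x) = ∫ (−(x − a•x₀)/σ²) k(x,x₀) dμ(x₀)`, and `a • g(x) = f(x) • x + σ² • ∇f(x)`;
equivalently the posterior mean `m(x) = g(x)/f(x)` satisfies
`m(x) = (1/a) • x + (σ²/a) • (∇f(x)/f(x))`. -/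
theorem tweedie_identity {d : ℕ} (hd : 1 ≤ d)
    (μ : Measure (EuclideanSpace ℝ (Fin d))) [IsProbabilityMeasure μ]
    (hμ : ∃ K : Set (EuclideanSpace ℝ (Fin d)), IsCompact K ∧ μ Kᶜ = 0)
    (a σ : ℝ) (ha : a ≠ 0) (hσ : 0 < σ)
    (k : EuclideanSpace ℝ (Fin d) → EuclideanSpace ℝ (Fin d) → ℝ)
    (hk : ∀ x x₀, k x x₀ =
      (2 * Real.pi * σ ^ 2) ^ (-(d : ℝ) / 2) * Real.exp (-‖x - a • x₀‖ ^ 2 / (2 * σ ^ 2)))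
    (f : EuclideanSpace ℝ (Fin d) → ℝ) (hf : ∀ x, f x = ∫ x₀, k x x₀ ∂μ)
    (g : EuclideanSpace ℝ (Fin d) → EuclideanSpace ℝ (Fin d))
    (hg : ∀ x, g x = ∫ x₀, k x x₀ • x₀ ∂μ) :
    (∀ x, 0 < f x) ∧
    (∀ x, HasGradientAt f (∫ x₀, k x x₀ • (-(σ ^ 2)⁻¹ • (x - a • x₀)) ∂μ) x) ∧
    (∀ x, a • g x = f x • x + σ ^ 2 • gradient f x) ∧
    (∀ x, (f x)⁻¹ • g x = a⁻¹ • x + (σ ^ 2 / a) • ((f x)⁻¹ • gradient f x)) := by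
  classical
  obtain ⟨K, hK, hKc⟩ := hμ
  obtain ⟨R, hR⟩ := hK.isBounded.subset_closedBall 0
  set R' : ℝ := max R 0 with hR'def
  have haeK : ∀ᵐ x₀ ∂μ, x₀ ∈ K := by
    rw [ae_iff]; exact hKc
  have haeR : ∀ᵐ x₀ ∂μ, ‖x₀‖ ≤ R' := by
    filter_upwards [haeK] with x₀ hx₀
    have := hR hx₀
    rw [Metric.mem_closedBall, dist_zero_right] at this
    exact this.trans (le_max_left _ _)
  set c : ℝ := (2 * Real.pi * σ ^ 2) ^ (-(d : ℝ) / 2) with hcdef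
  have hc : 0 < c := Real.rpow_pos_of_pos (by positivity) _
  have hkpos : ∀ x x₀, 0 < k x x₀ := by
    intro x x₀; rw [hk]; positivity
  have hkle : ∀ x x₀, k x x₀ ≤ c := by
    intro x x₀; rw [hk]
    have h1 : Real.exp (-‖x - a • x₀‖ ^ 2 / (2 * σ ^ 2)) ≤ 1 := by
      rw [Real.exp_le_one_iff]
      apply div_nonpos_of_nonpos_of_nonneg
      · simp [sq_nonneg]
      · positivity
    nlinarith [hc]
  have hkcontfun : ∀ x, (fun x₀ => k x x₀) =
      fun x₀ : EuclideanSpace ℝ (Fin d) =>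
        c * Real.exp (-‖x - a • x₀‖ ^ 2 / (2 * σ ^ 2)) := by
    intro x; funext x₀; rw [hk]
  have hkcont : ∀ x, Continuous (fun x₀ => k x x₀) := by
    intro x; rw [hkcontfun x]; fun_prop
  have hkint : ∀ x, Integrable (fun x₀ => k x x₀) μ := by
    intro x
    refine (integrable_const c).mono' (hkcont x).aestronglyMeasurable ?_
    exact Filter.Eventually.of_forall fun x₀ => by
      rw [Real.norm_eq_abs, abs_of_pos (hkpos x x₀)]; exact hkle x x₀
  have hgint : ∀ x, Integrable (fun x₀ => k x x₀ • x₀) μ := by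
    intro x
    refine (integrable_const (c * R')).mono'
      (((hkcont x).smul continuous_id).aestronglyMeasurable) ?_
    filter_upwards [haeR] with x₀ hx₀
    rw [norm_smul, Real.norm_eq_abs, abs_of_pos (hkpos x x₀)]
    exact mul_le_mul (hkle x x₀) hx₀ (norm_nonneg _) hc.le
  have hfpos : ∀ x, 0 < f x := by
    intro x
    rw [hf]
    rw [integral_pos_iff_support_of_nonneg (fun x₀ => (hkpos x x₀).le) (hkint x)]
    have : Function.support (fun x₀ => k x x₀) = Set.univ :=
      Set.eq_univ_of_forall fun x₀ => (hkpos x x₀).ne'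
    rw [this]
    simp
  have hvint : ∀ x, Integrable (fun x₀ => k x x₀ • (-(σ ^ 2)⁻¹ • (x - a • x₀))) μ := by
    intro x
    refine (integrable_const (c * ((σ ^ 2)⁻¹ * (‖x‖ + |a| * R')))).mono' ?_ ?_
    · apply Continuous.aestronglyMeasurable
      have : (fun x₀ : EuclideanSpace ℝ (Fin d) => k x x₀ • (-(σ ^ 2)⁻¹ • (x - a • x₀)))
          = fun x₀ => (c * Real.exp (-‖x - a • x₀‖ ^ 2 / (2 * σ ^ 2))) •
            (-(σ ^ 2)⁻¹ • (x - a • x₀)) := by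
        funext x₀; rw [hk]
      rw [this]; fun_prop
    · filter_upwards [haeR] with x₀ hx₀
      simp only [norm_smul, Real.norm_eq_abs, abs_of_pos (hkpos x x₀), abs_neg, abs_inv,
        abs_of_pos (show (0:ℝ) < σ ^ 2 by positivity)]
      have hb : ‖x - a • x₀‖ ≤ ‖x‖ + |a| * R' := by
        calc ‖x - a • x₀‖ ≤ ‖x‖ + ‖a • x₀‖ := norm_sub_le _ _
        _ ≤ ‖x‖ + |a| * R' := by
            rw [norm_smul, Real.norm_eq_abs]; gcongr
      gcongr
      exact hkle x x₀
  have hgrad : ∀ x, HasGradientAt f (∫ x₀, k x x₀ • (-(σ ^ 2)⁻¹ • (x - a • x₀)) ∂μ) x := by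
    intro x
    rw [hasGradientAt_iff_hasFDerivAt]
    have key : HasFDerivAt (fun x' => ∫ x₀, k x' x₀ ∂μ)
        (∫ x₀, (InnerProductSpace.toDual ℝ (EuclideanSpace ℝ (Fin d)))
          (k x x₀ • (-(σ ^ 2)⁻¹ • (x - a • x₀))) ∂μ) x := by
      apply hasFDerivAt_integral_of_dominated_of_fderiv_le
        (F' := fun x' x₀ => (InnerProductSpace.toDual ℝ (EuclideanSpace ℝ (Fin d)))
          (k x' x₀ • (-(σ ^ 2)⁻¹ • (x' - a • x₀))))
        (bound := fun _ => c * ((σ ^ 2)⁻¹ * (‖x‖ + 1 + |a| * R'))) (Metric.ball_mem_nhds x one_pos)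
      · exact Filter.Eventually.of_forall fun x' => (hkcont x').aestronglyMeasurable
      · exact hkint x
      · apply Continuous.aestronglyMeasurable
        apply (InnerProductSpace.toDual ℝ (EuclideanSpace ℝ (Fin d))).continuous.comp
        have : (fun x₀ : EuclideanSpace ℝ (Fin d) => k x x₀ • (-(σ ^ 2)⁻¹ • (x - a • x₀)))
            = fun x₀ => (c * Real.exp (-‖x - a • x₀‖ ^ 2 / (2 * σ ^ 2))) •
              (-(σ ^ 2)⁻¹ • (x - a • x₀)) := by
          funext x₀; rw [hk]
        rw [this]; fun_prop
      · filter_upwards [haeR] with x₀ hx₀ x' hx'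
        rw [LinearIsometryEquiv.norm_map]
        simp only [norm_smul, Real.norm_eq_abs, abs_of_pos (hkpos x' x₀), abs_neg, abs_inv,
          abs_of_pos (show (0:ℝ) < σ ^ 2 by positivity)]
        have hx'n : ‖x'‖ ≤ ‖x‖ + 1 := by
          have h1 := mem_ball_iff_norm.mp hx'
          have h2 := norm_sub_norm_le x' x
          linarith
        have hb : ‖x' - a • x₀‖ ≤ ‖x‖ + 1 + |a| * R' := by
          calc ‖x' - a • x₀‖ ≤ ‖x'‖ + ‖a • x₀‖ := norm_sub_le _ _
          _ ≤ ‖x‖ + 1 + |a| * R' := by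
              rw [norm_smul, Real.norm_eq_abs]; gcongr
        gcongr
        exact hkle x' x₀
      · exact integrable_const _
      · refine Filter.Eventually.of_forall fun x₀ x' _ => ?_
        have h := gauss_hasFDerivAt σ c hσ (a • x₀) x'
        have hfun : (fun y : EuclideanSpace ℝ (Fin d) => k y x₀) =
            fun y => c * Real.exp (-‖y - a • x₀‖ ^ 2 / (2 * σ ^ 2)) := funext fun y => hk y x₀
        rw [show (fun y : EuclideanSpace ℝ (Fin d) => k y x₀) = _ from hfun, hk x' x₀]
        exact h
    have heq : (InnerProductSpace.toDual ℝ (EuclideanSpace ℝ (Fin d)))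
        (∫ x₀, k x x₀ • (-(σ ^ 2)⁻¹ • (x - a • x₀)) ∂μ)
        = ∫ x₀, (InnerProductSpace.toDual ℝ (EuclideanSpace ℝ (Fin d)))
            (k x x₀ • (-(σ ^ 2)⁻¹ • (x - a • x₀))) ∂μ :=
      ((InnerProductSpace.toDual ℝ
        (EuclideanSpace ℝ (Fin d))).toLinearIsometry.integral_comp_comm _).symm
    have hfe : f = fun x' => ∫ x₀, k x' x₀ ∂μ := funext hf
    rw [hfe, heq]
    exact key
  have hthird : ∀ x, a • g x = f x • x + σ ^ 2 • gradient f x := by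
    intro x
    have hgr := (hgrad x).gradient
    rw [hgr, hg, hf]
    have hσ2 : (σ ^ 2 : ℝ) ≠ 0 := by positivity
    rw [← integral_smul, ← integral_smul]
    have hsub : ∀ x₀ : EuclideanSpace ℝ (Fin d),
        σ ^ 2 • (k x x₀ • (-(σ ^ 2)⁻¹ • (x - a • x₀)))
        = a • (k x x₀ • x₀) - k x x₀ • x := by
      intro x₀
      rw [smul_comm (σ ^ 2), smul_smul (σ ^ 2)]
      rw [show (σ ^ 2) * -(σ ^ 2)⁻¹ = -1 by field_simp]
      rw [smul_sub]
      module
    have hI1 : Integrable (fun x₀ => a • (k x x₀ • x₀)) μ := (hgint x).smul a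
    rw [integral_congr_ae (Filter.Eventually.of_forall hsub),
      integral_sub hI1 ((hkint x).smul_const x), integral_smul_const,
      show (∫ x₀, a • (k x x₀ • x₀) ∂μ) = a • ∫ x₀, k x x₀ • x₀ ∂μ from integral_smul _ _]
    abel
  refine ⟨hfpos, hgrad, hthird, fun x => ?_⟩
  have h3 := hthird x
  have hg' : g x = a⁻¹ • (f x • x + σ ^ 2 • gradient f x) := by
    rw [← h3, inv_smul_smul₀ ha]
  rw [hg']
  have hfx : f x ≠ 0 := (hfpos x).ne'
  match_scalars
  · field_simp
  · field_simp
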